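/- Let k ≥ 1 be an integer, let K = (a₁,a₂) × (b₁,b₂) be a rectangle with a₁ < a₂ and b₁ < b₂, and let z be a continuous real-valued function on the closure of K. Then there exists a unique polynomial P(x,y) of degree at most k in each variable such that: (i) ∬_K P v dx dy = ∬_K z v dx dy for every polynomial v of degree at most k−1 in each variable; (ii) ∫_{b₁}^{b₂} P(a₂,y) v(y) dy = ∫_{b₁}^{b₂} z(a₂,y) v(y) dy for every single-variable polynomial v of degree at most k−1; (iii) ∫_{a₁}^{a₂} P(x,b₂) v(x) dx = ∫_{a₁}^{a₂} z(x,b₂) v(x) dx for every single-variable polynomial v of degree at most k−1; and (iv) P(a₂,b₂) = z(a₂,b₂). (This is the well-definedness of the two-dimensional local Gauss–Radau projection Π⁻.) -/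

import Mathlib

open MeasureTheory

noncomputable section

/-- Mixed partial derivative `∂_x^i ∂_y^j f`. -/
def pd (i j : ℕ) (f : ℝ → ℝ → ℝ) (x y : ℝ) : ℝ :=
  iteratedDeriv i (fun x' => iteratedDeriv j (fun y' => f x' y') y) x

/-- `f` is a real polynomial of degree at most `m` in the first variable
and at most `n` in the second variable. -/
def Poly2 (m n : ℕ) (f : ℝ → ℝ → ℝ) : Prop :=
  ∃ c : Fin (m + 1) → Fin (n + 1) → ℝ,
    ∀ x y : ℝ, f x y = ∑ p : Fin (m + 1), ∑ q : Fin (n + 1), c p q * x ^ (p : ℕ) * y ^ (q : ℕ)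

/-- `f` is a real polynomial of degree at most `m`. -/
def Poly1 (m : ℕ) (f : ℝ → ℝ) : Prop :=
  ∃ c : Fin (m + 1) → ℝ, ∀ x : ℝ, f x = ∑ p : Fin (m + 1), c p * x ^ (p : ℕ)

/-- Shishkin mesh transition parameter `τ₁ = (σ ε / α) ln N`. -/
def Tau1 (σ ε α : ℝ) (N : ℕ) : ℝ := σ * ε / α * Real.log N

/-- Shishkin mesh transition parameter `τ₂ = (σ √ε / δ) ln N`. -/
def Tau2 (σ ε δ : ℝ) (N : ℕ) : ℝ := σ * Real.sqrt ε / δ * Real.log N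

/-- Shishkin mesh points in the x-direction. -/
def xpt (σ ε α : ℝ) (N i : ℕ) : ℝ :=
  if i ≤ N / 2 then 2 * (1 - Tau1 σ ε α N) * (i : ℝ) / N
  else 1 - 2 * Tau1 σ ε α N * (1 - (i : ℝ) / N)

/-- Shishkin mesh points in the y-direction. -/
def ypt (σ ε δ : ℝ) (N j : ℕ) : ℝ :=
  if j ≤ N / 4 then 4 * Tau2 σ ε δ N * (j : ℝ) / N
  else if j ≤ 3 * N / 4 then Tau2 σ ε δ N + 2 * (1 - 2 * Tau2 σ ε δ N) * ((j : ℝ) / N - 1 / 4)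
  else 1 - 4 * Tau2 σ ε δ N * (1 - (j : ℝ) / N)

/-- The solution decomposition `u = u₀ + u₁ + u₂ + u₁₂` into a smooth part, an exponential
layer, characteristic layers and corner layers, with the associated derivative bounds
up to total order `k + 2` (Assumption 2.1 of the paper, with `m = k`). -/
def ShishkinDecomp (k : ℕ) (C₀ ε α δ : ℝ) (u : ℝ → ℝ → ℝ) : Prop :=
  ContDiff ℝ ((k : ℕ∞) + 2) (fun p : ℝ × ℝ => u p.1 p.2) ∧
  ∃ u0 u1 u2 u12 : ℝ → ℝ → ℝ,
    (∀ x y : ℝ, u x y = u0 x y + u1 x y + u2 x y + u12 x y) ∧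
    ∀ i j : ℕ, i + j ≤ k + 2 → ∀ x ∈ Set.Icc (0:ℝ) 1, ∀ y ∈ Set.Icc (0:ℝ) 1,
      |pd i j u0 x y| ≤ C₀ ∧
      |pd i j u1 x y| ≤ C₀ * ε ^ (-(i : ℝ)) * Real.exp (-(α * (1 - x) / ε)) ∧
      |pd i j u2 x y| ≤ C₀ * ε ^ (-((j : ℝ) / 2)) *
        (Real.exp (-(δ * y / Real.sqrt ε)) + Real.exp (-(δ * (1 - y) / Real.sqrt ε))) ∧
      |pd i j u12 x y| ≤ C₀ * ε ^ (-((i : ℝ) + (j : ℝ) / 2)) * Real.exp (-(α * (1 - x) / ε)) *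
        (Real.exp (-(δ * y / Real.sqrt ε)) + Real.exp (-(δ * (1 - y) / Real.sqrt ε)))

/-- `P` is the local Gauss–Radau projection `Π⁻ z` on the rectangle `(x0,x1) × (y0,y1)`. -/
def GRm (k : ℕ) (x0 x1 y0 y1 : ℝ) (z P : ℝ → ℝ → ℝ) : Prop :=
  Poly2 k k P ∧
  (∀ v : ℝ → ℝ → ℝ, Poly2 (k - 1) (k - 1) v →
      (∫ x in x0..x1, ∫ y in y0..y1, P x y * v x y) =
        ∫ x in x0..x1, ∫ y in y0..y1, z x y * v x y) ∧
  (∀ v : ℝ → ℝ, Poly1 (k - 1) v →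
      (∫ y in y0..y1, P x1 y * v y) = ∫ y in y0..y1, z x1 y * v y) ∧
  (∀ v : ℝ → ℝ, Poly1 (k - 1) v →
      (∫ x in x0..x1, P x y1 * v x) = ∫ x in x0..x1, z x y1 * v x) ∧
  P x1 y1 = z x1 y1

/-- `P` is the local Gauss–Radau projection `Π_x⁺ z` on the rectangle `(x0,x1) × (y0,y1)`. -/
def GRxp (k : ℕ) (x0 x1 y0 y1 : ℝ) (z P : ℝ → ℝ → ℝ) : Prop :=
  Poly2 k k P ∧
  (∀ v : ℝ → ℝ → ℝ, Poly2 (k - 1) k v →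
      (∫ x in x0..x1, ∫ y in y0..y1, P x y * v x y) =
        ∫ x in x0..x1, ∫ y in y0..y1, z x y * v x y) ∧
  (∀ v : ℝ → ℝ, Poly1 k v →
      (∫ y in y0..y1, P x0 y * v y) = ∫ y in y0..y1, z x0 y * v y)

/-- `P` is the local Gauss–Radau projection `Π_y⁺ z` on the rectangle `(x0,x1) × (y0,y1)`. -/
def GRyp (k : ℕ) (x0 x1 y0 y1 : ℝ) (z P : ℝ → ℝ → ℝ) : Prop :=
  Poly2 k k P ∧
  (∀ v : ℝ → ℝ → ℝ, Poly2 k (k - 1) v →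
      (∫ x in x0..x1, ∫ y in y0..y1, P x y * v x y) =
        ∫ x in x0..x1, ∫ y in y0..y1, z x y * v x y) ∧
  (∀ v : ℝ → ℝ, Poly1 k v →
      (∫ x in x0..x1, P x y0 * v x) = ∫ x in x0..x1, z x y0 * v x)

/-- Squared `L²` norm over the rectangle `(x0,x1) × (y0,y1)`. -/
def elemL2sq (x0 x1 y0 y1 : ℝ) (f : ℝ → ℝ → ℝ) : ℝ :=
  ∫ x in x0..x1, ∫ y in y0..y1, (f x y) ^ 2

/-- Elementwise sum of double integrals over all mesh elements `K_{ij}`: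
the `L²(Ω)` inner-product-type quantity `Σ_{i,j} ∫∫_{K_{ij}} F_{ij}`. -/
def ip2 (N : ℕ) (xp yp : ℕ → ℝ) (F : ℕ → ℕ → ℝ → ℝ → ℝ) : ℝ :=
  ∑ i ∈ Finset.Icc 1 N, ∑ j ∈ Finset.Icc 1 N,
    ∫ x in xp (i - 1)..xp i, ∫ y in yp (j - 1)..yp j, F i j x y

/-- Jump `[v]_{i,y} = v⁺_{i,y} - v⁻_{i,y}` of a piecewise function (given by its element
polynomials `v i j` on `K_{ij}`) across the vertical mesh line `x = x_i`, with the
conventions `v⁻_{0,y} = 0` and `v⁺_{N,y} = 0`. -/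
def jmpX (N : ℕ) (xp : ℕ → ℝ) (v : ℕ → ℕ → ℝ → ℝ → ℝ) (i j : ℕ) (y : ℝ) : ℝ :=
  (if i < N then v (i + 1) j (xp i) y else 0) - (if 0 < i then v i j (xp i) y else 0)

/-- Jump `[v]_{x,j}` across the horizontal mesh line `y = y_j`, with the conventions
`v⁻_{x,0} = 0` and `v⁺_{x,N} = 0`. -/
def jmpY (N : ℕ) (yp : ℕ → ℝ) (v : ℕ → ℕ → ℝ → ℝ → ℝ) (i j : ℕ) (x : ℝ) : ℝ :=
  (if j < N then v i (j + 1) x (yp j) else 0) - (if 0 < j then v i j x (yp j) else 0)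

/-- The LDG bilinear form `B(W; z)` for `W = (U,P,Q)` and `z = (v,s,r)`, where each
piecewise function is described by its restrictions to the mesh elements `K_{ij}`,
and derivatives are taken elementwise. -/
def Bform (ε lam1 lam2 : ℝ) (a b : ℝ → ℝ → ℝ) (N : ℕ) (xp yp : ℕ → ℝ)
    (U P Q v s r : ℕ → ℕ → ℝ → ℝ → ℝ) : ℝ :=
  ε⁻¹ * (ip2 N xp yp (fun i j x y => P i j x y * s i j x y)
       + ip2 N xp yp (fun i j x y => Q i j x y * r i j x y))
  + ip2 N xp yp (fun i j x y =>
      (b x y - deriv (fun x' => a x' y) x) * U i j x y * v i j x y)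
  + ip2 N xp yp (fun i j x y => U i j x y * deriv (fun x' => s i j x' y) x)
  + (∑ j ∈ Finset.Icc 1 N, ∑ i ∈ Finset.Icc 1 (N - 1),
      ∫ y in yp (j - 1)..yp j, U i j (xp i) y * (s (i + 1) j (xp i) y - s i j (xp i) y))
  + ip2 N xp yp (fun i j x y => U i j x y * deriv (fun y' => r i j x y') y)
  + (∑ i ∈ Finset.Icc 1 N, ∑ j ∈ Finset.Icc 1 (N - 1),
      ∫ x in xp (i - 1)..xp i, U i j x (yp j) * (r i (j + 1) x (yp j) - r i j x (yp j)))
  + ip2 N xp yp (fun i j x y => P i j x y * deriv (fun x' => v i j x' y) x)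
  + (∑ j ∈ Finset.Icc 1 N,
      ((∑ i ∈ Finset.range N,
          ∫ y in yp (j - 1)..yp j, P (i + 1) j (xp i) y * jmpX N xp v i j y)
        - ∫ y in yp (j - 1)..yp j, P N j (xp N) y * v N j (xp N) y))
  + ip2 N xp yp (fun i j x y => Q i j x y * deriv (fun y' => v i j x y') y)
  + (∑ i ∈ Finset.Icc 1 N,
      ((∑ j ∈ Finset.range N,
          ∫ x in xp (i - 1)..xp i, Q i (j + 1) x (yp j) * jmpY N yp v i j x)
        - ∫ x in xp (i - 1)..xp i, Q i N x (yp N) * v i N x (yp N)))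
  - ip2 N xp yp (fun i j x y => a x y * U i j x y * deriv (fun x' => v i j x' y) x)
  - (∑ j ∈ Finset.Icc 1 N, ∑ i ∈ Finset.Icc 1 N,
      ∫ y in yp (j - 1)..yp j, a (xp i) y * U i j (xp i) y * jmpX N xp v i j y)
  + (∑ j ∈ Finset.Icc 1 N,
      lam1 * ∫ y in yp (j - 1)..yp j, U N j (xp N) y * v N j (xp N) y)
  + (∑ i ∈ Finset.Icc 1 N,
      lam2 * ∫ x in xp (i - 1)..xp i, U i N x (yp N) * v i N x (yp N))

/-- The square `|||z|||²` of the LDG energy norm of a triple `z = (v,s,r)` of piecewise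
functions, computed with elementwise traces and the boundary conventions of the paper. -/
def enormSq (ε lam1 lam2 : ℝ) (a b : ℝ → ℝ → ℝ) (N : ℕ) (xp yp : ℕ → ℝ)
    (v s r : ℕ → ℕ → ℝ → ℝ → ℝ) : ℝ :=
  ε⁻¹ * ip2 N xp yp (fun i j x y => (s i j x y) ^ 2)
  + ε⁻¹ * ip2 N xp yp (fun i j x y => (r i j x y) ^ 2)
  + ip2 N xp yp (fun i j x y =>
      (b x y - deriv (fun x' => a x' y) x / 2) * (v i j x y) ^ 2)
  + (∑ j ∈ Finset.Icc 1 N, ∑ i ∈ Finset.range (N + 1),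
      (1 / 2) * ∫ y in yp (j - 1)..yp j, a (xp i) y * (jmpX N xp v i j y) ^ 2)
  + (∑ j ∈ Finset.Icc 1 N, lam1 * ∫ y in yp (j - 1)..yp j, (jmpX N xp v N j y) ^ 2)
  + (∑ i ∈ Finset.Icc 1 N, lam2 * ∫ x in xp (i - 1)..xp i, (jmpY N yp v i N x) ^ 2)

/-- The local bilinear form `D¹_{ij}(η_u; s)`, where `η_u = u - Π⁻u` is described by the
family `P` of element Gauss–Radau projections (`η_u = u - P i j` on `K_{ij}`). -/
def D1form (xp yp : ℕ → ℝ) (u : ℝ → ℝ → ℝ) (P s : ℕ → ℕ → ℝ → ℝ → ℝ) (i j : ℕ) : ℝ :=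
  (∫ x in xp (i - 1)..xp i, ∫ y in yp (j - 1)..yp j,
      (u x y - P i j x y) * deriv (fun x' => s i j x' y) x)
  - (∫ y in yp (j - 1)..yp j, (u (xp i) y - P i j (xp i) y) * s i j (xp i) y)
  + (∫ y in yp (j - 1)..yp j,
      (if i = 1 then 0 else u (xp (i - 1)) y - P (i - 1) j (xp (i - 1)) y) * s i j (xp (i - 1)) y)

/-- The local bilinear form `D²_{ij}(η_u; s)`. -/
def D2form (xp yp : ℕ → ℝ) (u : ℝ → ℝ → ℝ) (P s : ℕ → ℕ → ℝ → ℝ → ℝ) (i j : ℕ) : ℝ :=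
  (∫ x in xp (i - 1)..xp i, ∫ y in yp (j - 1)..yp j,
      (u x y - P i j x y) * deriv (fun y' => s i j x y') y)
  - (∫ x in xp (i - 1)..xp i, (u x (yp j) - P i j x (yp j)) * s i j x (yp j))
  + (∫ x in xp (i - 1)..xp i,
      (if j = 1 then 0 else u x (yp (j - 1)) - P i (j - 1) x (yp (j - 1))) * s i j x (yp (j - 1)))

namespace GRaux

open Polynomial intervalIntegral Set Function


lemma eval_mk {m : ℕ} (a : Fin m → ℝ) (x : ℝ) :
    (∑ p : Fin m, C (a p) * X ^ (p : ℕ)).eval x = ∑ p : Fin m, a p * x ^ (p : ℕ) := by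
  simp [Polynomial.eval_finset_sum]

lemma coeff_mk {m : ℕ} (a : Fin m → ℝ) (i : Fin m) :
    (∑ p : Fin m, C (a p) * X ^ (p : ℕ)).coeff (i : ℕ) = a i := by
  rw [Polynomial.finset_sum_coeff]
  simp only [Polynomial.coeff_C_mul, Polynomial.coeff_X_pow]
  rw [Finset.sum_eq_single i] <;> simp +contextual [Fin.val_eq_val, eq_comm]

lemma natDegree_mk_lt {m : ℕ} (hm : 0 < m) (a : Fin m → ℝ) :
    (∑ p : Fin m, C (a p) * X ^ (p : ℕ)).natDegree < m := by
  have := Polynomial.natDegree_sum_le_of_forall_le (s := Finset.univ)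
    (f := fun p : Fin m => C (a p) * X ^ (p : ℕ)) (n := m - 1) ?_
  · omega
  · intro i _
    exact (Polynomial.natDegree_C_mul_le _ _).trans (by simp; omega)

lemma coeff1_zero {m : ℕ} (a : Fin m → ℝ)
    (h : ∀ x : ℝ, ∑ p : Fin m, a p * x ^ (p : ℕ) = 0) : ∀ p, a p = 0 := by
  have hQ : (∑ p : Fin m, C (a p) * X ^ (p : ℕ)) = 0 := by
    apply Polynomial.funext
    intro r
    rw [eval_mk, h r, eval_zero]
  intro p
  have := congrArg (fun Q : Polynomial ℝ => Q.coeff (p : ℕ)) hQ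
  rw [coeff_mk] at this
  simpa using this

lemma coeff2_zero {m n : ℕ} (c : Fin m → Fin n → ℝ)
    (h : ∀ x y : ℝ, ∑ p : Fin m, ∑ q : Fin n, c p q * x ^ (p : ℕ) * y ^ (q : ℕ) = 0) :
    ∀ p q, c p q = 0 := by
  intro p q
  have h1 : ∀ x : ℝ, ∀ q', (∑ p' : Fin m, c p' q' * x ^ (p' : ℕ)) = 0 := by
    intro x
    apply coeff1_zero (fun q' => ∑ p' : Fin m, c p' q' * x ^ (p' : ℕ))
    intro y
    rw [← h x y, Finset.sum_comm]
    exact Finset.sum_congr rfl fun q' _ => by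
      rw [Finset.sum_mul]
  exact coeff1_zero (fun p' => c p' q) (fun x => h1 x q) p


lemma pos_of_ne {a b : ℝ} (hab : a < b) {f : ℝ → ℝ} (hf : Continuous f)
    (h0 : ∀ x ∈ Set.Icc a b, 0 ≤ f x)
    {x₀ : ℝ} (hx₀ : x₀ ∈ Set.Ioo a b) (hne : f x₀ ≠ 0) :
    0 < ∫ x in a..b, f x := by
  rw [integral_pos_iff_support_of_nonneg_ae' ?ae (hf.intervalIntegrable a b)]
  case ae =>
    apply ae_restrict_of_forall_mem measurableSet_uIoc
    intro x hx
    rw [Set.uIoc_of_le hab.le] at hx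
    exact h0 x ⟨hx.1.le, hx.2⟩
  refine ⟨hab, ?_⟩
  have hopen : IsOpen ({x | f x ≠ 0} ∩ Set.Ioo a b) :=
    (isOpen_compl_singleton.preimage hf).inter isOpen_Ioo
  have hsub : ({x | f x ≠ 0} ∩ Set.Ioo a b) ⊆ support f ∩ Set.Ioc a b := by
    rintro x ⟨h1, h2⟩
    exact ⟨h1, h2.1, h2.2.le⟩
  calc (0 : ENNReal) < volume ({x | f x ≠ 0} ∩ Set.Ioo a b) :=
        hopen.measure_pos volume ⟨x₀, hne, hx₀⟩
    _ ≤ _ := measure_mono hsub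

lemma pos_contra {a b : ℝ} (hab : a < b) {f : ℝ → ℝ} (hf : Continuous f)
    (h0 : ∀ x ∈ Set.Icc a b, 0 ≤ f x) (hi : (∫ x in a..b, f x) = 0)
    {x₀ : ℝ} (hx₀ : x₀ ∈ Set.Ioo a b) (hne : f x₀ ≠ 0) : False :=
  absurd hi (ne_of_gt (pos_of_ne hab hf h0 hx₀ hne))

lemma pos_contra2 {a₁ a₂ b₁ b₂ : ℝ} (ha : a₁ < a₂) (hb : b₁ < b₂) {f : ℝ → ℝ → ℝ}
    (hf : Continuous fun s : ℝ × ℝ => f s.1 s.2)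
    (h0 : ∀ x ∈ Set.Icc a₁ a₂, ∀ y ∈ Set.Icc b₁ b₂, 0 ≤ f x y)
    (hi : (∫ x in a₁..a₂, ∫ y in b₁..b₂, f x y) = 0)
    {x₀ y₀ : ℝ} (hx₀ : x₀ ∈ Set.Ioo a₁ a₂) (hy₀ : y₀ ∈ Set.Ioo b₁ b₂)
    (hne : f x₀ y₀ ≠ 0) : False := by
  have hI : Continuous fun x => ∫ y in b₁..b₂, f x y :=
    continuous_parametric_intervalIntegral_of_continuous' hf b₁ b₂
  refine pos_contra ha hI ?_ hi hx₀ ?_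
  · intro x hx
    exact intervalIntegral.integral_nonneg hb.le fun y hy => h0 x hx y hy
  · have hfx : Continuous fun y => f x₀ y := hf.comp (Continuous.prodMk_right x₀)
    exact ne_of_gt (pos_of_ne hb hfx (fun y hy => h0 x₀ ⟨hx₀.1.le, hx₀.2.le⟩ y hy) hy₀ hne)

lemma R1 (a b : ℝ) {g : ℝ → ℝ} (hg : Continuous g) {n : ℕ} (d : Fin n → ℝ) :
    (∫ x in a..b, g x * ∑ p : Fin n, d p * x ^ (p : ℕ))
      = ∑ p : Fin n, d p * ∫ x in a..b, g x * x ^ (p : ℕ) := by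
  have h : ∀ x : ℝ, g x * ∑ p : Fin n, d p * x ^ (p : ℕ)
      = ∑ p : Fin n, d p * (g x * x ^ (p : ℕ)) := fun x => by
    rw [Finset.mul_sum]
    exact Finset.sum_congr rfl fun p _ => by ring
  simp only [h]
  rw [intervalIntegral.integral_finset_sum]
  · exact Finset.sum_congr rfl fun p _ => intervalIntegral.integral_const_mul _ _
  · intro p _
    exact (Continuous.intervalIntegrable (by fun_prop) a b)


lemma R2 (a₁ a₂ b₁ b₂ : ℝ) {f : ℝ → ℝ → ℝ}
    (hf : Continuous fun s : ℝ × ℝ => f s.1 s.2)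
    {m n : ℕ} (d : Fin m → Fin n → ℝ) :
    (∫ x in a₁..a₂, ∫ y in b₁..b₂,
        f x y * ∑ p : Fin m, ∑ q : Fin n, d p q * x ^ (p : ℕ) * y ^ (q : ℕ))
      = ∑ p : Fin m, ∑ q : Fin n, d p q *
          ∫ x in a₁..a₂, ∫ y in b₁..b₂, f x y * x ^ (p : ℕ) * y ^ (q : ℕ) := by
  have hfx : ∀ x : ℝ, Continuous fun y => f x y := fun x => hf.comp (Continuous.prodMk_right x)
  have hG : ∀ j : ℕ, Continuous fun x => ∫ y in b₁..b₂, f x y * y ^ j := fun j =>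
    continuous_parametric_intervalIntegral_of_continuous'
      (f := fun x y => f x y * y ^ j) (by fun_prop) b₁ b₂
  have h1 : ∀ x : ℝ, (∫ y in b₁..b₂,
      f x y * ∑ p : Fin m, ∑ q : Fin n, d p q * x ^ (p : ℕ) * y ^ (q : ℕ))
      = ∑ p : Fin m, ∑ q : Fin n, (d p q * x ^ (p : ℕ)) *
          ∫ y in b₁..b₂, f x y * y ^ (q : ℕ) := by
    intro x
    have hsw : ∀ y : ℝ, f x y * ∑ p : Fin m, ∑ q : Fin n, d p q * x ^ (p : ℕ) * y ^ (q : ℕ)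
        = ∑ p : Fin m, ∑ q : Fin n, (d p q * x ^ (p : ℕ)) * (f x y * y ^ (q : ℕ)) := by
      intro y
      rw [Finset.mul_sum]
      refine Finset.sum_congr rfl fun p _ => ?_
      rw [Finset.mul_sum]
      exact Finset.sum_congr rfl fun q _ => by ring
    simp only [hsw]
    rw [intervalIntegral.integral_finset_sum]
    · refine Finset.sum_congr rfl fun p _ => ?_
      rw [intervalIntegral.integral_finset_sum]
      · exact Finset.sum_congr rfl fun q _ => intervalIntegral.integral_const_mul _ _
      · intro q _
        exact Continuous.intervalIntegrable (by fun_prop (disch := exact hfx x)) _ _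
    · intro p _
      refine Continuous.intervalIntegrable ?_ _ _
      apply continuous_finset_sum
      intro q _
      exact continuous_const.mul ((hfx x).mul (continuous_pow _))
  simp only [h1]
  rw [intervalIntegral.integral_finset_sum]
  · refine Finset.sum_congr rfl fun p _ => ?_
    rw [intervalIntegral.integral_finset_sum]
    · refine Finset.sum_congr rfl fun q _ => ?_
      have h2 : (∫ x in a₁..a₂, ∫ y in b₁..b₂, f x y * x ^ (p : ℕ) * y ^ (q : ℕ))
          = ∫ x in a₁..a₂, x ^ (p : ℕ) * ∫ y in b₁..b₂, f x y * y ^ (q : ℕ) := by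
        refine intervalIntegral.integral_congr fun x _ => ?_
        rw [← intervalIntegral.integral_const_mul]
        refine intervalIntegral.integral_congr fun y _ => ?_
        ring
      rw [h2, ← intervalIntegral.integral_const_mul]
      simp only [mul_assoc]
    · intro q _
      refine Continuous.intervalIntegrable ?_ _ _
      exact (continuous_const.mul (continuous_pow _)).mul (hG (q : ℕ))
  · intro p _
    refine Continuous.intervalIntegrable ?_ _ _
    apply continuous_finset_sum
    intro q _
    exact (continuous_const.mul (continuous_pow _)).mul (hG (q : ℕ))

lemma gr1d {a b : ℝ} (hab : a < b) {k : ℕ} (hk : 1 ≤ k) (e : Fin (k + 1) → ℝ)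
    (horth : ∀ q : ℕ, q < k →
      (∫ x in a..b, (∑ i : Fin (k + 1), e i * x ^ (i : ℕ)) * x ^ q) = 0)
    (hend : ∑ i : Fin (k + 1), e i * b ^ (i : ℕ) = 0) :
    ∀ x : ℝ, ∑ i : Fin (k + 1), e i * x ^ (i : ℕ) = 0 := by
  set G : Polynomial ℝ := ∑ i : Fin (k + 1), C (e i) * X ^ (i : ℕ) with hG
  have hGev : ∀ x, G.eval x = ∑ i : Fin (k + 1), e i * x ^ (i : ℕ) := eval_mk e
  have hroot : G.IsRoot b := by
    rw [IsRoot.def, hGev, hend]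
  set H := G /ₘ (X - C b) with hH
  have hfact : (X - C b) * H = G := mul_divByMonic_eq_iff_isRoot.2 hroot
  have hcont : Continuous fun x : ℝ => ∑ i : Fin (k + 1), e i * x ^ (i : ℕ) := by
    apply continuous_finset_sum
    intro i _
    exact continuous_const.mul (continuous_pow _)
  have hdH : H.natDegree < k := by
    have h1 := natDegree_divByMonic G (monic_X_sub_C b)
    rw [natDegree_X_sub_C, ← hH] at h1
    have h2 := natDegree_mk_lt (by omega : 0 < k + 1) e
    rw [← hG] at h2
    omega
  by_cases hH0 : H = 0
  · intro x
    rw [← hGev, ← hfact, hH0, mul_zero, eval_zero]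
  exfalso
  have hHev : ∀ x : ℝ, H.eval x = ∑ q : Fin k, H.coeff (q : ℕ) * x ^ (q : ℕ) := by
    intro x
    rw [Polynomial.eval_eq_sum_range' hdH, ← Fin.sum_univ_eq_sum_range]
  have hint : (∫ x in a..b, (∑ i : Fin (k + 1), e i * x ^ (i : ℕ)) * H.eval x) = 0 := by
    have heq : (∫ x in a..b, (∑ i : Fin (k + 1), e i * x ^ (i : ℕ)) * H.eval x)
        = ∫ x in a..b, (∑ i : Fin (k + 1), e i * x ^ (i : ℕ)) *
            ∑ q : Fin k, H.coeff (q : ℕ) * x ^ (q : ℕ) := by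
      simp only [hHev]
    rw [heq, R1 a b hcont]
    refine Finset.sum_eq_zero fun q _ => ?_
    rw [horth (q : ℕ) q.2, mul_zero]
  have h2 : (∫ x in a..b, (b - x) * (H.eval x) ^ 2) = 0 := by
    have hpt : ∀ x : ℝ, (b - x) * (H.eval x) ^ 2
        = -((∑ i : Fin (k + 1), e i * x ^ (i : ℕ)) * H.eval x) := by
      intro x
      rw [← hGev, ← hfact, eval_mul]
      simp only [eval_sub, eval_X, eval_C]
      ring
    simp only [hpt]
    rw [intervalIntegral.integral_neg, hint, neg_zero]
  obtain ⟨y₀, hy₀mem, hy₀⟩ : ∃ y₀ ∈ Set.Ioo a b, ¬H.IsRoot y₀ := by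
    have hinf := Set.Ioo_infinite hab
    have hfin := Polynomial.finite_setOf_isRoot hH0
    obtain ⟨y, hy⟩ := (hinf.diff hfin).nonempty
    exact ⟨y, hy.1, hy.2⟩
  refine pos_contra hab ?_ ?_ h2 hy₀mem ?_
  · exact (continuous_const.sub continuous_id).mul (H.continuous.pow 2)
  · intro x hx
    exact mul_nonneg (by linarith [hx.2]) (sq_nonneg _)
  · have : (0:ℝ) < (b - y₀) * (H.eval y₀) ^ 2 :=
      mul_pos (by linarith [hy₀mem.2]) (sq_pos_of_ne_zero hy₀)
    exact ne_of_gt this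


def pf {m n : ℕ} (c : Fin m → Fin n → ℝ) (x y : ℝ) : ℝ :=
  ∑ p : Fin m, ∑ q : Fin n, c p q * x ^ (p : ℕ) * y ^ (q : ℕ)

lemma pf_continuous {m n : ℕ} (c : Fin m → Fin n → ℝ) :
    Continuous fun s : ℝ × ℝ => pf c s.1 s.2 := by
  unfold pf
  apply continuous_finset_sum; intro p _
  apply continuous_finset_sum; intro q _
  exact (continuous_const.mul (continuous_fst.pow _)).mul (continuous_snd.pow _)

lemma pf_swap {m n : ℕ} (c : Fin m → Fin n → ℝ) (x y : ℝ) :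
    pf c x y = ∑ q : Fin n, (∑ p : Fin m, c p q * x ^ (p : ℕ)) * y ^ (q : ℕ) := by
  unfold pf
  rw [Finset.sum_comm]
  refine Finset.sum_congr rfl fun q _ => ?_
  rw [Finset.sum_mul]

lemma pf_swap' {m n : ℕ} (c : Fin m → Fin n → ℝ) (x y : ℝ) :
    pf c x y = ∑ p : Fin m, (∑ q : Fin n, c p q * y ^ (q : ℕ)) * x ^ (p : ℕ) := by
  unfold pf
  refine Finset.sum_congr rfl fun p _ => ?_
  rw [Finset.sum_mul]
  exact Finset.sum_congr rfl fun q _ => by ring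

lemma homzero {k : ℕ} (hk : 1 ≤ k) {a₁ a₂ b₁ b₂ : ℝ} (ha : a₁ < a₂) (hb : b₁ < b₂)
    (c : Fin (k + 1) → Fin (k + 1) → ℝ)
    (hT1 : ∀ p q : ℕ, p < k → q < k →
      (∫ x in a₁..a₂, ∫ y in b₁..b₂, pf c x y * x ^ p * y ^ q) = 0)
    (hT2 : ∀ q : ℕ, q < k → (∫ y in b₁..b₂, pf c a₂ y * y ^ q) = 0)
    (hT3 : ∀ p : ℕ, p < k → (∫ x in a₁..a₂, pf c x b₂ * x ^ p) = 0)
    (hT4 : pf c a₂ b₂ = 0) :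
    ∀ p q, c p q = 0 := by
  -- Step A : the edge x = a₂ vanishes
  have hA : ∀ y : ℝ, pf c a₂ y = 0 := by
    intro y
    rw [pf_swap]
    refine gr1d hb hk (fun q => ∑ p : Fin (k + 1), c p q * a₂ ^ (p : ℕ)) ?_ ?_ y
    · intro q hq
      rw [← hT2 q hq]
      exact intervalIntegral.integral_congr fun t _ => by rw [pf_swap]
    · rw [← pf_swap]; exact hT4
  have he : ∀ q : Fin (k + 1), (∑ p : Fin (k + 1), c p q * a₂ ^ (p : ℕ)) = 0 := by
    refine coeff1_zero _ fun y => ?_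
    rw [← pf_swap]; exact hA y
  -- Step B : the edge y = b₂ vanishes
  have hB : ∀ x : ℝ, pf c x b₂ = 0 := by
    intro x
    rw [pf_swap']
    refine gr1d ha hk (fun p => ∑ q : Fin (k + 1), c p q * b₂ ^ (q : ℕ)) ?_ ?_ x
    · intro p hp
      rw [← hT3 p hp]
      exact intervalIntegral.integral_congr fun t _ => by rw [pf_swap']
    · rw [← pf_swap']; exact hT4
  -- Step C : factor out (x - a₂)
  set Rq : Fin (k + 1) → Polynomial ℝ :=
    fun q => ∑ p : Fin (k + 1), C (c p q) * X ^ (p : ℕ) with hRq_def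
  set Sq : Fin (k + 1) → Polynomial ℝ := fun q => Rq q /ₘ (X - C a₂) with hSq_def
  have hfacS : ∀ q, (X - C a₂) * Sq q = Rq q := by
    intro q
    refine mul_divByMonic_eq_iff_isRoot.2 ?_
    show (Rq q).eval a₂ = 0
    rw [hRq_def]
    rw [eval_mk]
    exact he q
  have hdS : ∀ q, (Sq q).natDegree < k := by
    intro q
    have h1 : (Sq q).natDegree = (Rq q).natDegree - 1 := by
      have := natDegree_divByMonic (Rq q) (monic_X_sub_C a₂)
      rwa [natDegree_X_sub_C] at this
    have h2 : (Rq q).natDegree < k + 1 := natDegree_mk_lt (by omega) _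
    omega
  have hpffac : ∀ x y : ℝ, pf c x y
      = (x - a₂) * ∑ q : Fin (k + 1), (Sq q).eval x * y ^ (q : ℕ) := by
    intro x y
    rw [pf_swap, Finset.mul_sum]
    refine Finset.sum_congr rfl fun q _ => ?_
    have hev : (∑ p : Fin (k + 1), c p q * x ^ (p : ℕ)) = (x - a₂) * (Sq q).eval x := by
      have h1 : (Rq q).eval x = ∑ p : Fin (k + 1), c p q * x ^ (p : ℕ) := by
        rw [hRq_def]; exact eval_mk _ x
      rw [← h1, ← hfacS q, eval_mul]
      simp
    rw [hev, mul_assoc]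
  -- Step F : transpose
  set Ap : Fin k → Polynomial ℝ :=
    fun p => ∑ q : Fin (k + 1), C ((Sq q).coeff (p : ℕ)) * X ^ (q : ℕ) with hAp_def
  have hAswap : ∀ x y : ℝ, (∑ q : Fin (k + 1), (Sq q).eval x * y ^ (q : ℕ))
      = ∑ p : Fin k, (Ap p).eval y * x ^ (p : ℕ) := by
    intro x y
    calc (∑ q : Fin (k + 1), (Sq q).eval x * y ^ (q : ℕ))
        = ∑ q : Fin (k + 1), ∑ p : Fin k,
            (Sq q).coeff (p : ℕ) * y ^ (q : ℕ) * x ^ (p : ℕ) := by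
          refine Finset.sum_congr rfl fun q _ => ?_
          rw [eval_eq_sum_range' (hdS q), ← Fin.sum_univ_eq_sum_range, Finset.sum_mul]
          exact Finset.sum_congr rfl fun p _ => by ring
      _ = ∑ p : Fin k, ∑ q : Fin (k + 1),
            (Sq q).coeff (p : ℕ) * y ^ (q : ℕ) * x ^ (p : ℕ) := Finset.sum_comm
      _ = _ := by
          refine Finset.sum_congr rfl fun p _ => ?_
          rw [hAp_def, eval_mk, Finset.sum_mul]
  have hApb : ∀ p : Fin k, (Ap p).eval b₂ = 0 := by
    have hWroot : ∀ x : ℝ, x ≠ a₂ → ∑ p : Fin k, (Ap p).eval b₂ * x ^ (p : ℕ) = 0 := by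
      intro x hx
      have h0 : (x - a₂) * ∑ p : Fin k, (Ap p).eval b₂ * x ^ (p : ℕ) = 0 := by
        rw [← hAswap x b₂, ← hpffac x b₂]
        exact hB x
      rcases mul_eq_zero.1 h0 with h | h
      · exact absurd (sub_eq_zero.1 h) hx
      · exact h
    have hW0 : (∑ p : Fin k, C ((Ap p).eval b₂) * X ^ (p : ℕ)) = 0 := by
      apply Polynomial.eq_zero_of_infinite_isRoot
      have hinf : Set.Infinite {x : ℝ | x ≠ a₂} :=
        Set.Finite.infinite_compl (Set.finite_singleton a₂)
      refine Set.Infinite.mono ?_ hinf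
      intro x hx
      show Polynomial.IsRoot _ x
      rw [Polynomial.IsRoot.def, eval_mk]
      exact hWroot x hx
    intro p
    have := congrArg (fun Q : Polynomial ℝ => Q.coeff (p : ℕ)) hW0
    rw [coeff_mk] at this
    simpa using this
  -- Step G : factor out (y - b₂)
  set Bp : Fin k → Polynomial ℝ := fun p => Ap p /ₘ (X - C b₂) with hBp_def
  have hfacB : ∀ p, (X - C b₂) * Bp p = Ap p :=
    fun p => mul_divByMonic_eq_iff_isRoot.2 (hApb p)
  have hdB : ∀ p, (Bp p).natDegree < k := by
    intro p
    have h1 : (Bp p).natDegree = (Ap p).natDegree - 1 := by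
      have := natDegree_divByMonic (Ap p) (monic_X_sub_C b₂)
      rwa [natDegree_X_sub_C] at this
    have h2 : (Ap p).natDegree < k + 1 := by rw [hAp_def]; exact natDegree_mk_lt (by omega) _
    omega
  have hpfB : ∀ x y : ℝ, pf c x y
      = (x - a₂) * ((y - b₂) * ∑ p : Fin k, (Bp p).eval y * x ^ (p : ℕ)) := by
    intro x y
    rw [hpffac, hAswap]
    congr 1
    rw [Finset.mul_sum]
    refine Finset.sum_congr rfl fun p _ => ?_
    rw [← hfacB p, eval_mul]
    simp
    ring
  have hBd : ∀ x y : ℝ, (∑ p : Fin k, (Bp p).eval y * x ^ (p : ℕ))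
      = ∑ p : Fin k, ∑ q : Fin k, (Bp p).coeff (q : ℕ) * x ^ (p : ℕ) * y ^ (q : ℕ) := by
    intro x y
    refine Finset.sum_congr rfl fun p _ => ?_
    rw [eval_eq_sum_range' (hdB p), ← Fin.sum_univ_eq_sum_range, Finset.sum_mul]
    exact Finset.sum_congr rfl fun q _ => by ring
  have hzero : (∫ x in a₁..a₂, ∫ y in b₁..b₂,
      (a₂ - x) * ((b₂ - y) * (∑ p : Fin k, (Bp p).eval y * x ^ (p : ℕ)) ^ 2)) = 0 := by
    have hptw : ∀ x y : ℝ,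
        (a₂ - x) * ((b₂ - y) * (∑ p : Fin k, (Bp p).eval y * x ^ (p : ℕ)) ^ 2)
        = pf c x y * ∑ p : Fin k, ∑ q : Fin k,
            (Bp p).coeff (q : ℕ) * x ^ (p : ℕ) * y ^ (q : ℕ) := by
      intro x y
      rw [← hBd, hpfB]
      ring
    calc (∫ x in a₁..a₂, ∫ y in b₁..b₂,
        (a₂ - x) * ((b₂ - y) * (∑ p : Fin k, (Bp p).eval y * x ^ (p : ℕ)) ^ 2))
        = ∫ x in a₁..a₂, ∫ y in b₁..b₂, pf c x y * ∑ p : Fin k, ∑ q : Fin k,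
            (Bp p).coeff (q : ℕ) * x ^ (p : ℕ) * y ^ (q : ℕ) := by
          refine intervalIntegral.integral_congr fun x _ => ?_
          exact intervalIntegral.integral_congr fun y _ => hptw x y
      _ = ∑ p : Fin k, ∑ q : Fin k, (Bp p).coeff (q : ℕ) *
            ∫ x in a₁..a₂, ∫ y in b₁..b₂, pf c x y * x ^ (p : ℕ) * y ^ (q : ℕ) :=
          R2 a₁ a₂ b₁ b₂ (pf_continuous c) _
      _ = 0 := by
          refine Finset.sum_eq_zero fun p _ => Finset.sum_eq_zero fun q _ => ?_
          rw [hT1 (p : ℕ) (q : ℕ) p.2 q.2, mul_zero]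
  have hBp0 : ∀ p, Bp p = 0 := by
    by_contra hcon
    push_neg at hcon
    obtain ⟨p₀, hp₀⟩ := hcon
    obtain ⟨y₀, hy₀mem, hy₀⟩ : ∃ y₀ ∈ Set.Ioo b₁ b₂, ¬(Bp p₀).IsRoot y₀ := by
      obtain ⟨y, hy⟩ :=
        ((Set.Ioo_infinite hb).diff (Polynomial.finite_setOf_isRoot hp₀)).nonempty
      exact ⟨y, hy.1, hy.2⟩
    have hV0 : (∑ p : Fin k, C ((Bp p).eval y₀) * X ^ (p : ℕ)) ≠ 0 := by
      intro h
      apply hy₀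
      have := congrArg (fun Q : Polynomial ℝ => Q.coeff (p₀ : ℕ)) h
      rw [coeff_mk] at this
      simpa using this
    obtain ⟨x₀, hx₀mem, hx₀⟩ : ∃ x₀ ∈ Set.Ioo a₁ a₂,
        ¬(∑ p : Fin k, C ((Bp p).eval y₀) * X ^ (p : ℕ)).IsRoot x₀ := by
      obtain ⟨x, hx⟩ :=
        ((Set.Ioo_infinite ha).diff (Polynomial.finite_setOf_isRoot hV0)).nonempty
      exact ⟨x, hx.1, hx.2⟩
    have hBne : (∑ p : Fin k, (Bp p).eval y₀ * x₀ ^ (p : ℕ)) ≠ 0 := by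
      rw [← eval_mk (fun p => (Bp p).eval y₀) x₀]
      exact hx₀
    refine pos_contra2 ha hb ?_ ?_ hzero hx₀mem hy₀mem ?_
    · have hBcont : Continuous fun s : ℝ × ℝ =>
          ∑ p : Fin k, (Bp p).eval s.2 * s.1 ^ (p : ℕ) := by
        apply continuous_finset_sum; intro p _
        exact ((Bp p).continuous.comp continuous_snd).mul (continuous_fst.pow _)
      exact (continuous_const.sub continuous_fst).mul
        ((continuous_const.sub continuous_snd).mul (hBcont.pow 2))
    · intro x hx y hy
      exact mul_nonneg (by linarith [hx.2]) (mul_nonneg (by linarith [hy.2]) (sq_nonneg _))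
    · exact ne_of_gt (mul_pos (by linarith [hx₀mem.2])
        (mul_pos (by linarith [hy₀mem.2]) (sq_pos_of_ne_zero hBne)))
  have hpf0 : ∀ x y : ℝ, pf c x y = 0 := by
    intro x y
    rw [hpfB]
    simp [hBp0]
  exact coeff2_zero c fun x y => hpf0 x y

-- 1D monomial expansion
lemma T2_mono (s₁ s₂ : ℝ) (j : ℕ) {m : ℕ} (e : Fin m → ℝ) :
    (∫ t in s₁..s₂, (∑ i : Fin m, e i * t ^ (i : ℕ)) * t ^ j)
      = ∑ i : Fin m, e i * ∫ t in s₁..s₂, t ^ ((i : ℕ) + j) := by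
  have hpt : ∀ t : ℝ, (∑ i : Fin m, e i * t ^ (i : ℕ)) * t ^ j
      = ∑ i : Fin m, e i * t ^ ((i : ℕ) + j) := by
    intro t
    rw [Finset.sum_mul]
    exact Finset.sum_congr rfl fun i _ => by rw [pow_add]; ring
  simp only [hpt]
  rw [intervalIntegral.integral_finset_sum]
  · exact Finset.sum_congr rfl fun i _ => intervalIntegral.integral_const_mul _ _
  · intro i _
    exact Continuous.intervalIntegrable (by fun_prop) _ _

-- 2D monomial expansion
lemma T1_mono (a₁ a₂ b₁ b₂ : ℝ) (i j : ℕ) {m n : ℕ} (c : Fin m → Fin n → ℝ) :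
    (∫ x in a₁..a₂, ∫ y in b₁..b₂, pf c x y * x ^ i * y ^ j)
      = ∑ p : Fin m, ∑ q : Fin n, c p q *
          ((∫ x in a₁..a₂, x ^ ((p : ℕ) + i)) * ∫ y in b₁..b₂, y ^ ((q : ℕ) + j)) := by
  have h1 : ∀ x : ℝ, (∫ y in b₁..b₂, pf c x y * x ^ i * y ^ j)
      = ∑ p : Fin m, ∑ q : Fin n, (c p q * x ^ ((p : ℕ) + i)) *
          ∫ y in b₁..b₂, y ^ ((q : ℕ) + j) := by
    intro x
    have hpt : ∀ y : ℝ, pf c x y * x ^ i * y ^ j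
        = ∑ p : Fin m, ∑ q : Fin n, (c p q * x ^ ((p : ℕ) + i)) * y ^ ((q : ℕ) + j) := by
      intro y
      unfold pf
      rw [Finset.sum_mul, Finset.sum_mul]
      refine Finset.sum_congr rfl fun p _ => ?_
      rw [Finset.sum_mul, Finset.sum_mul]
      refine Finset.sum_congr rfl fun q _ => ?_
      rw [pow_add, pow_add]; ring
    simp only [hpt]
    rw [intervalIntegral.integral_finset_sum]
    · refine Finset.sum_congr rfl fun p _ => ?_
      rw [intervalIntegral.integral_finset_sum]
      · exact Finset.sum_congr rfl fun q _ => intervalIntegral.integral_const_mul _ _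
      · intro q _
        exact Continuous.intervalIntegrable (by fun_prop) _ _
    · intro p _
      refine Continuous.intervalIntegrable ?_ _ _
      exact continuous_finset_sum _ fun q _ => continuous_const.mul (continuous_pow _)
  simp only [h1]
  rw [intervalIntegral.integral_finset_sum]
  · refine Finset.sum_congr rfl fun p _ => ?_
    rw [intervalIntegral.integral_finset_sum]
    · refine Finset.sum_congr rfl fun q _ => ?_
      have hpt2 : ∀ x : ℝ, (c p q * x ^ ((p : ℕ) + i)) * (∫ y in b₁..b₂, y ^ ((q : ℕ) + j))
          = (c p q * (∫ y in b₁..b₂, y ^ ((q : ℕ) + j))) * x ^ ((p : ℕ) + i) := fun x => by ring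
      simp only [hpt2]
      rw [intervalIntegral.integral_const_mul]
      ring
    · intro q _
      exact Continuous.intervalIntegrable (by fun_prop) _ _
  · intro p _
    refine Continuous.intervalIntegrable ?_ _ _
    exact continuous_finset_sum _ fun q _ =>
      (continuous_const.mul (continuous_pow _)).mul continuous_const

variable (k : ℕ) (a₁ a₂ b₁ b₂ : ℝ)

/-- The Gauss–Radau functionals of `pf c`, arranged as a square array. -/
noncomputable def Lmap (c : Fin (k + 1) → Fin (k + 1) → ℝ) : Fin (k + 1) → Fin (k + 1) → ℝ :=
  fun p q =>
    if (p : ℕ) < k then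
      (if (q : ℕ) < k then
        ∫ x in a₁..a₂, ∫ y in b₁..b₂, pf c x y * x ^ (p : ℕ) * y ^ (q : ℕ)
       else ∫ x in a₁..a₂, pf c x b₂ * x ^ (p : ℕ))
    else
      (if (q : ℕ) < k then ∫ y in b₁..b₂, pf c a₂ y * y ^ (q : ℕ)
       else pf c a₂ b₂)

/-- The weights expressing `Lmap` as an explicit linear map. -/
noncomputable def wt (p q p' q' : Fin (k + 1)) : ℝ :=
  (if (p : ℕ) < k then ∫ x in a₁..a₂, x ^ ((p' : ℕ) + (p : ℕ)) else a₂ ^ (p' : ℕ)) *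
  (if (q : ℕ) < k then ∫ y in b₁..b₂, y ^ ((q' : ℕ) + (q : ℕ)) else b₂ ^ (q' : ℕ))

lemma Lmap_eq_sum (c : Fin (k + 1) → Fin (k + 1) → ℝ) (p q : Fin (k + 1)) :
    Lmap k a₁ a₂ b₁ b₂ c p q
      = ∑ p' : Fin (k + 1), ∑ q' : Fin (k + 1), c p' q' * wt k a₁ a₂ b₁ b₂ p q p' q' := by
  by_cases hp : (p : ℕ) < k <;> by_cases hq : (q : ℕ) < k <;>
    simp only [Lmap, wt, hp, hq, if_true, if_false]
  · exact T1_mono a₁ a₂ b₁ b₂ (p : ℕ) (q : ℕ) c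
  · have h1 : (∫ x in a₁..a₂, pf c x b₂ * x ^ (p : ℕ))
        = ∫ x in a₁..a₂, (∑ p' : Fin (k + 1),
            (∑ q' : Fin (k + 1), c p' q' * b₂ ^ (q' : ℕ)) * x ^ (p' : ℕ)) * x ^ (p : ℕ) := by
      refine intervalIntegral.integral_congr fun x _ => ?_
      rw [pf_swap']
    rw [h1, T2_mono]
    refine Finset.sum_congr rfl fun p' _ => ?_
    rw [Finset.sum_mul]
    exact Finset.sum_congr rfl fun q' _ => by ring
  · have h1 : (∫ y in b₁..b₂, pf c a₂ y * y ^ (q : ℕ))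
        = ∫ y in b₁..b₂, (∑ q' : Fin (k + 1),
            (∑ p' : Fin (k + 1), c p' q' * a₂ ^ (p' : ℕ)) * y ^ (q' : ℕ)) * y ^ (q : ℕ) := by
      refine intervalIntegral.integral_congr fun y _ => ?_
      rw [pf_swap]
    rw [h1, T2_mono, Finset.sum_comm]
    refine Finset.sum_congr rfl fun q' _ => ?_
    rw [Finset.sum_mul]
    exact Finset.sum_congr rfl fun p' _ => by ring
  · unfold pf
    refine Finset.sum_congr rfl fun p' _ => Finset.sum_congr rfl fun q' _ => by ring

/-- `Lmap` as a linear map. -/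
noncomputable def LL : (Fin (k + 1) → Fin (k + 1) → ℝ) →ₗ[ℝ] (Fin (k + 1) → Fin (k + 1) → ℝ) where
  toFun c := fun p q =>
    ∑ p' : Fin (k + 1), ∑ q' : Fin (k + 1), c p' q' * wt k a₁ a₂ b₁ b₂ p q p' q'
  map_add' c c' := by
    funext p q
    simp [add_mul, Finset.sum_add_distrib]
  map_smul' r c := by
    funext p q
    simp [Finset.mul_sum, mul_assoc]

lemma LL_apply (c : Fin (k + 1) → Fin (k + 1) → ℝ) :
    LL k a₁ a₂ b₁ b₂ c = Lmap k a₁ a₂ b₁ b₂ c := by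
  funext p q
  exact (Lmap_eq_sum k a₁ a₂ b₁ b₂ c p q).symm



lemma pf_sub {m n : ℕ} (c₁ c₂ : Fin m → Fin n → ℝ) (x y : ℝ) :
    pf (c₁ - c₂) x y = pf c₁ x y - pf c₂ x y := by
  unfold pf
  rw [← Finset.sum_sub_distrib]
  refine Finset.sum_congr rfl fun p _ => ?_
  rw [← Finset.sum_sub_distrib]
  refine Finset.sum_congr rfl fun q _ => ?_
  simp [sub_mul]

lemma mono1 {m : ℕ} (i : Fin m) (x : ℝ) :
    x ^ (i : ℕ) = ∑ p : Fin m, (if p = i then (1 : ℝ) else 0) * x ^ (p : ℕ) := by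
  rw [Finset.sum_eq_single i]
  · rw [if_pos rfl, one_mul]
  · intro b _ hb
    rw [if_neg hb, zero_mul]
  · intro h
    exact absurd (Finset.mem_univ i) h

lemma mono2 {m n : ℕ} (i : Fin m) (j : Fin n) (x y : ℝ) :
    x ^ (i : ℕ) * y ^ (j : ℕ)
      = ∑ p : Fin m, ∑ q : Fin n,
          (if p = i ∧ q = j then (1 : ℝ) else 0) * x ^ (p : ℕ) * y ^ (q : ℕ) := by
  rw [Finset.sum_eq_single i]
  · rw [Finset.sum_eq_single j]
    · rw [if_pos ⟨rfl, rfl⟩, one_mul]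
    · intro b _ hb
      rw [if_neg (fun h => hb h.2), zero_mul, zero_mul]
    · intro h
      exact absurd (Finset.mem_univ j) h
  · intro b _ hb
    refine Finset.sum_eq_zero fun q _ => ?_
    rw [if_neg (fun h => hb h.1), zero_mul, zero_mul]
  · intro h
    exact absurd (Finset.mem_univ i) h

lemma intint_sub (a₁ a₂ b₁ b₂ : ℝ) {f g : ℝ → ℝ → ℝ}
    (hf : Continuous fun s : ℝ × ℝ => f s.1 s.2)
    (hg : Continuous fun s : ℝ × ℝ => g s.1 s.2) :
    (∫ x in a₁..a₂, ∫ y in b₁..b₂, (f x y - g x y))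
      = (∫ x in a₁..a₂, ∫ y in b₁..b₂, f x y)
        - ∫ x in a₁..a₂, ∫ y in b₁..b₂, g x y := by
  have h1 : ∀ x : ℝ, (∫ y in b₁..b₂, (f x y - g x y))
      = (∫ y in b₁..b₂, f x y) - ∫ y in b₁..b₂, g x y := fun x =>
    intervalIntegral.integral_sub
      ((hf.comp (Continuous.prodMk_right x)).intervalIntegrable _ _)
      ((hg.comp (Continuous.prodMk_right x)).intervalIntegrable _ _)
  simp only [h1]
  exact intervalIntegral.integral_sub
    ((continuous_parametric_intervalIntegral_of_continuous' hf _ _).intervalIntegrable _ _)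
    ((continuous_parametric_intervalIntegral_of_continuous' hg _ _).intervalIntegrable _ _)

lemma LL_inj {k : ℕ} (hk : 1 ≤ k) {a₁ a₂ b₁ b₂ : ℝ} (ha : a₁ < a₂) (hb : b₁ < b₂) :
    Function.Injective (LL k a₁ a₂ b₁ b₂) := by
  refine (injective_iff_map_eq_zero _).2 ?_
  intro c hc
  have hcpq : ∀ p q : Fin (k + 1), Lmap k a₁ a₂ b₁ b₂ c p q = 0 := by
    intro p q
    rw [← LL_apply]
    simpa using congrFun (congrFun hc p) q
  funext p q
  refine homzero hk ha hb c ?_ ?_ ?_ ?_ p q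
  · intro i j hi hj
    have := hcpq ⟨i, by omega⟩ ⟨j, by omega⟩
    simpa [Lmap, hi, hj] using this
  · intro j hj
    have := hcpq ⟨k, by omega⟩ ⟨j, by omega⟩
    simpa [Lmap, hj, lt_irrefl] using this
  · intro i hi
    have := hcpq ⟨i, by omega⟩ ⟨k, by omega⟩
    simpa [Lmap, hi, lt_irrefl] using this
  · have := hcpq ⟨k, by omega⟩ ⟨k, by omega⟩
    simpa [Lmap, lt_irrefl] using this

set_option maxHeartbeats 1000000 in
lemma GR_unique {k : ℕ} (hk : 1 ≤ k) {a₁ a₂ b₁ b₂ : ℝ} (ha : a₁ < a₂) (hb : b₁ < b₂)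
    (z : ℝ → ℝ → ℝ) (P₁ P₂ : ℝ → ℝ → ℝ)
    (h₁ : GRm k a₁ a₂ b₁ b₂ z P₁) (h₂ : GRm k a₁ a₂ b₁ b₂ z P₂) : P₁ = P₂ := by
  obtain ⟨c₁, hd₁⟩ := h₁.1
  obtain ⟨c₂, hd₂⟩ := h₂.1
  have hkk : k - 1 + 1 = k := by omega
  have key : ∀ p q, (c₁ - c₂) p q = 0 := by
    refine homzero hk ha hb (c₁ - c₂) ?_ ?_ ?_ ?_
    · intro i j hi hj
      have hi' : i < k - 1 + 1 := by omega
      have hj' : j < k - 1 + 1 := by omega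
      have hv : Poly2 (k - 1) (k - 1) (fun x y => x ^ i * y ^ j) :=
        ⟨fun p q => if p = ⟨i, hi'⟩ ∧ q = ⟨j, hj'⟩ then (1 : ℝ) else 0,
         fun x y => mono2 ⟨i, hi'⟩ ⟨j, hj'⟩ x y⟩
      have e₁ := h₁.2.1 _ hv
      have e₂ := h₂.2.1 _ hv
      have hsplit : (∫ x in a₁..a₂, ∫ y in b₁..b₂, pf (c₁ - c₂) x y * x ^ i * y ^ j)
          = (∫ x in a₁..a₂, ∫ y in b₁..b₂, pf c₁ x y * x ^ i * y ^ j)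
            - ∫ x in a₁..a₂, ∫ y in b₁..b₂, pf c₂ x y * x ^ i * y ^ j := by
        rw [← intint_sub a₁ a₂ b₁ b₂
          (f := fun x y => pf c₁ x y * x ^ i * y ^ j)
          (g := fun x y => pf c₂ x y * x ^ i * y ^ j)
          (((pf_continuous c₁).mul (continuous_fst.pow i)).mul (continuous_snd.pow j))
          (((pf_continuous c₂).mul (continuous_fst.pow i)).mul (continuous_snd.pow j))]
        refine intervalIntegral.integral_congr fun x _ => ?_
        refine intervalIntegral.integral_congr fun y _ => ?_
        rw [pf_sub]
        ring
      have hP₁ : (∫ x in a₁..a₂, ∫ y in b₁..b₂, pf c₁ x y * x ^ i * y ^ j)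
          = ∫ x in a₁..a₂, ∫ y in b₁..b₂, z x y * (x ^ i * y ^ j) := by
        rw [← e₁]
        refine intervalIntegral.integral_congr fun x _ => ?_
        refine intervalIntegral.integral_congr fun y _ => ?_
        rw [hd₁]
        unfold pf
        ring
      have hP₂ : (∫ x in a₁..a₂, ∫ y in b₁..b₂, pf c₂ x y * x ^ i * y ^ j)
          = ∫ x in a₁..a₂, ∫ y in b₁..b₂, z x y * (x ^ i * y ^ j) := by
        rw [← e₂]
        refine intervalIntegral.integral_congr fun x _ => ?_
        refine intervalIntegral.integral_congr fun y _ => ?_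
        rw [hd₂]
        unfold pf
        ring
      rw [hsplit, hP₁, hP₂, sub_self]
    · intro j hj
      have hj' : j < k - 1 + 1 := by omega
      have hv : Poly1 (k - 1) (fun y => y ^ j) :=
        ⟨fun q => if q = ⟨j, hj'⟩ then (1 : ℝ) else 0, fun y => mono1 ⟨j, hj'⟩ y⟩
      have e₁ := h₁.2.2.1 _ hv
      have e₂ := h₂.2.2.1 _ hv
      have hsplit : (∫ y in b₁..b₂, pf (c₁ - c₂) a₂ y * y ^ j)
          = (∫ y in b₁..b₂, pf c₁ a₂ y * y ^ j) - ∫ y in b₁..b₂, pf c₂ a₂ y * y ^ j := by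
        have hcc1 : Continuous fun y : ℝ => pf c₁ a₂ y * y ^ j := by
          exact ((pf_continuous c₁).comp (Continuous.prodMk_right a₂)).mul (continuous_pow j)
        have hcc2 : Continuous fun y : ℝ => pf c₂ a₂ y * y ^ j := by
          exact ((pf_continuous c₂).comp (Continuous.prodMk_right a₂)).mul (continuous_pow j)
        rw [← intervalIntegral.integral_sub (hcc1.intervalIntegrable _ _)
          (hcc2.intervalIntegrable _ _)]
        refine intervalIntegral.integral_congr fun y _ => ?_
        rw [pf_sub]
        ring
      rw [hsplit, show (∫ y in b₁..b₂, pf c₁ a₂ y * y ^ j)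
            = ∫ y in b₁..b₂, z a₂ y * y ^ j from by
          rw [← e₁]
          exact intervalIntegral.integral_congr fun y _ => by rw [hd₁]; rfl,
        show (∫ y in b₁..b₂, pf c₂ a₂ y * y ^ j)
            = ∫ y in b₁..b₂, z a₂ y * y ^ j from by
          rw [← e₂]
          exact intervalIntegral.integral_congr fun y _ => by rw [hd₂]; rfl,
        sub_self]
    · intro i hi
      have hi' : i < k - 1 + 1 := by omega
      have hv : Poly1 (k - 1) (fun x => x ^ i) :=
        ⟨fun q => if q = ⟨i, hi'⟩ then (1 : ℝ) else 0, fun x => mono1 ⟨i, hi'⟩ x⟩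
      have e₁ := h₁.2.2.2.1 _ hv
      have e₂ := h₂.2.2.2.1 _ hv
      have hcont : ∀ m' n' (c : Fin m' → Fin n' → ℝ), Continuous fun x : ℝ => pf c x b₂ :=
        fun m' n' c => (pf_continuous c).comp (continuous_id.prodMk continuous_const)
      have hsplit : (∫ x in a₁..a₂, pf (c₁ - c₂) x b₂ * x ^ i)
          = (∫ x in a₁..a₂, pf c₁ x b₂ * x ^ i) - ∫ x in a₁..a₂, pf c₂ x b₂ * x ^ i := by
        have hcc1 : Continuous fun x : ℝ => pf c₁ x b₂ * x ^ i := by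
          exact ((hcont _ _ c₁).mul (continuous_pow i))
        have hcc2 : Continuous fun x : ℝ => pf c₂ x b₂ * x ^ i := by
          exact ((hcont _ _ c₂).mul (continuous_pow i))
        rw [← intervalIntegral.integral_sub (hcc1.intervalIntegrable _ _)
          (hcc2.intervalIntegrable _ _)]
        refine intervalIntegral.integral_congr fun x _ => ?_
        rw [pf_sub]
        ring
      rw [hsplit, show (∫ x in a₁..a₂, pf c₁ x b₂ * x ^ i)
            = ∫ x in a₁..a₂, z x b₂ * x ^ i from by
          rw [← e₁]
          exact intervalIntegral.integral_congr fun x _ => by rw [hd₁]; rfl,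
        show (∫ x in a₁..a₂, pf c₂ x b₂ * x ^ i)
            = ∫ x in a₁..a₂, z x b₂ * x ^ i from by
          rw [← e₂]
          exact intervalIntegral.integral_congr fun x _ => by rw [hd₂]; rfl,
        sub_self]
    · rw [pf_sub]
      have g₁ : pf c₁ a₂ b₂ = z a₂ b₂ :=
        (show pf c₁ a₂ b₂ = P₁ a₂ b₂ from (hd₁ a₂ b₂).symm).trans h₁.2.2.2.2
      have g₂ : pf c₂ a₂ b₂ = z a₂ b₂ :=
        (show pf c₂ a₂ b₂ = P₂ a₂ b₂ from (hd₂ a₂ b₂).symm).trans h₂.2.2.2.2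
      rw [g₁, g₂, sub_self]
  have hceq : c₁ = c₂ := by
    funext p q
    have := key p q
    simpa [sub_eq_zero] using this
  funext x y
  rw [hd₁, hd₂, hceq]

set_option maxHeartbeats 1000000 in
lemma GR_main {k : ℕ} (hk : 1 ≤ k) {a₁ a₂ b₁ b₂ : ℝ} (ha : a₁ < a₂) (hb : b₁ < b₂)
    (z : ℝ → ℝ → ℝ) (hz : Continuous fun s : ℝ × ℝ => z s.1 s.2) :
    ∃! P : ℝ → ℝ → ℝ, GRm k a₁ a₂ b₁ b₂ z P := by
  obtain ⟨c, hc⟩ := (LinearMap.injective_iff_surjective.1 (LL_inj hk ha hb))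
    (fun p q : Fin (k + 1) =>
      if (p : ℕ) < k then
        (if (q : ℕ) < k then
          ∫ x in a₁..a₂, ∫ y in b₁..b₂, z x y * x ^ (p : ℕ) * y ^ (q : ℕ)
         else ∫ x in a₁..a₂, z x b₂ * x ^ (p : ℕ))
      else
        (if (q : ℕ) < k then ∫ y in b₁..b₂, z a₂ y * y ^ (q : ℕ) else z a₂ b₂))
  rw [LL_apply] at hc
  have hcpq := fun p q : Fin (k + 1) => congrFun (congrFun hc p) q
  have hc1 : ∀ i j : ℕ, i < k → j < k →
      (∫ x in a₁..a₂, ∫ y in b₁..b₂, pf c x y * x ^ i * y ^ j)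
        = ∫ x in a₁..a₂, ∫ y in b₁..b₂, z x y * x ^ i * y ^ j := by
    intro i j hi hj
    have := hcpq ⟨i, by omega⟩ ⟨j, by omega⟩
    simpa [Lmap, hi, hj] using this
  have hc2 : ∀ j : ℕ, j < k →
      (∫ y in b₁..b₂, pf c a₂ y * y ^ j) = ∫ y in b₁..b₂, z a₂ y * y ^ j := by
    intro j hj
    have := hcpq ⟨k, by omega⟩ ⟨j, by omega⟩
    simpa [Lmap, hj, lt_irrefl] using this
  have hc3 : ∀ i : ℕ, i < k →
      (∫ x in a₁..a₂, pf c x b₂ * x ^ i) = ∫ x in a₁..a₂, z x b₂ * x ^ i := by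
    intro i hi
    have := hcpq ⟨i, by omega⟩ ⟨k, by omega⟩
    simpa [Lmap, hi, lt_irrefl] using this
  have hc4 : pf c a₂ b₂ = z a₂ b₂ := by
    have := hcpq ⟨k, by omega⟩ ⟨k, by omega⟩
    simpa [Lmap, lt_irrefl] using this
  have hGR : GRm k a₁ a₂ b₁ b₂ z (pf c) := by
    refine ⟨⟨c, fun x y => rfl⟩, ?_, ?_, ?_, hc4⟩
    · -- condition (i)
      rintro v ⟨d, hd⟩
      calc (∫ x in a₁..a₂, ∫ y in b₁..b₂, pf c x y * v x y)
          = ∫ x in a₁..a₂, ∫ y in b₁..b₂, pf c x y * ∑ p : Fin (k - 1 + 1),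
              ∑ q : Fin (k - 1 + 1), d p q * x ^ (p : ℕ) * y ^ (q : ℕ) := by
            refine intervalIntegral.integral_congr fun x _ => ?_
            exact intervalIntegral.integral_congr fun y _ => by rw [hd]
        _ = ∑ p : Fin (k - 1 + 1), ∑ q : Fin (k - 1 + 1), d p q *
              ∫ x in a₁..a₂, ∫ y in b₁..b₂, pf c x y * x ^ (p : ℕ) * y ^ (q : ℕ) :=
            R2 a₁ a₂ b₁ b₂ (pf_continuous c) d
        _ = ∑ p : Fin (k - 1 + 1), ∑ q : Fin (k - 1 + 1), d p q *
              ∫ x in a₁..a₂, ∫ y in b₁..b₂, z x y * x ^ (p : ℕ) * y ^ (q : ℕ) := by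
            refine Finset.sum_congr rfl fun p _ => Finset.sum_congr rfl fun q _ => ?_
            rw [hc1 (p : ℕ) (q : ℕ) (by omega) (by omega)]
        _ = ∫ x in a₁..a₂, ∫ y in b₁..b₂, z x y * ∑ p : Fin (k - 1 + 1),
              ∑ q : Fin (k - 1 + 1), d p q * x ^ (p : ℕ) * y ^ (q : ℕ) :=
            (R2 a₁ a₂ b₁ b₂ hz d).symm
        _ = ∫ x in a₁..a₂, ∫ y in b₁..b₂, z x y * v x y := by
            refine intervalIntegral.integral_congr fun x _ => ?_
            exact intervalIntegral.integral_congr fun y _ => by rw [hd]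
    · -- condition (ii)
      rintro v ⟨d, hd⟩
      have hgz : Continuous fun y => z a₂ y := hz.comp (Continuous.prodMk_right a₂)
      have hgP : Continuous fun y => pf c a₂ y := (pf_continuous c).comp (Continuous.prodMk_right a₂)
      calc (∫ y in b₁..b₂, pf c a₂ y * v y)
          = ∫ y in b₁..b₂, pf c a₂ y * ∑ q : Fin (k - 1 + 1), d q * y ^ (q : ℕ) :=
            intervalIntegral.integral_congr fun y _ => by rw [hd]
        _ = ∑ q : Fin (k - 1 + 1), d q * ∫ y in b₁..b₂, pf c a₂ y * y ^ (q : ℕ) :=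
            R1 b₁ b₂ hgP d
        _ = ∑ q : Fin (k - 1 + 1), d q * ∫ y in b₁..b₂, z a₂ y * y ^ (q : ℕ) := by
            refine Finset.sum_congr rfl fun q _ => ?_
            rw [hc2 (q : ℕ) (by omega)]
        _ = ∫ y in b₁..b₂, z a₂ y * ∑ q : Fin (k - 1 + 1), d q * y ^ (q : ℕ) :=
            (R1 b₁ b₂ hgz d).symm
        _ = ∫ y in b₁..b₂, z a₂ y * v y :=
            intervalIntegral.integral_congr fun y _ => by rw [hd]
    · -- condition (iii)
      rintro v ⟨d, hd⟩
      have hgz : Continuous fun x => z x b₂ := hz.comp (continuous_id.prodMk continuous_const)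
      have hgP : Continuous fun x => pf c x b₂ :=
        (pf_continuous c).comp (continuous_id.prodMk continuous_const)
      calc (∫ x in a₁..a₂, pf c x b₂ * v x)
          = ∫ x in a₁..a₂, pf c x b₂ * ∑ q : Fin (k - 1 + 1), d q * x ^ (q : ℕ) :=
            intervalIntegral.integral_congr fun x _ => by rw [hd]
        _ = ∑ q : Fin (k - 1 + 1), d q * ∫ x in a₁..a₂, pf c x b₂ * x ^ (q : ℕ) :=
            R1 a₁ a₂ hgP d
        _ = ∑ q : Fin (k - 1 + 1), d q * ∫ x in a₁..a₂, z x b₂ * x ^ (q : ℕ) := by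
            refine Finset.sum_congr rfl fun q _ => ?_
            rw [hc3 (q : ℕ) (by omega)]
        _ = ∫ x in a₁..a₂, z x b₂ * ∑ q : Fin (k - 1 + 1), d q * x ^ (q : ℕ) :=
            (R1 a₁ a₂ hgz d).symm
        _ = ∫ x in a₁..a₂, z x b₂ * v x :=
            intervalIntegral.integral_congr fun x _ => by rw [hd]
  exact ⟨pf c, hGR, fun P' hP' => GR_unique hk ha hb z P' (pf c) hP' hGR⟩


end GRaux

/-- Well-definedness of the two-dimensional local Gauss–Radau projection `Π⁻`:
on a rectangle `(a₁,a₂) × (b₁,b₂)`, every continuous function `z` has a unique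
Gauss–Radau projection of degree at most `k` in each variable. -/
theorem GRminus_existsUnique (k : ℕ) (hk : 1 ≤ k) (a₁ a₂ b₁ b₂ : ℝ)
    (ha : a₁ < a₂) (hb : b₁ < b₂) (z : ℝ → ℝ → ℝ)
    (hz : ContinuousOn (fun p : ℝ × ℝ => z p.1 p.2) (Set.Icc a₁ a₂ ×ˢ Set.Icc b₁ b₂)) :
    ∃! P : ℝ → ℝ → ℝ, GRm k a₁ a₂ b₁ b₂ z P := by
  have hS : IsClosed (Set.Icc a₁ a₂ ×ˢ Set.Icc b₁ b₂) := isClosed_Icc.prod isClosed_Icc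
  obtain ⟨g, hg⟩ := ContinuousMap.exists_restrict_eq (Y := ℝ) hS
    ⟨(Set.Icc a₁ a₂ ×ˢ Set.Icc b₁ b₂).restrict (fun p : ℝ × ℝ => z p.1 p.2), hz.restrict⟩
  have hg' : ∀ x ∈ Set.Icc a₁ a₂, ∀ y ∈ Set.Icc b₁ b₂, g (x, y) = z x y := by
    intro x hx y hy
    have := DFunLike.congr_fun hg (⟨(x, y), ⟨hx, hy⟩⟩ :
      (Set.Icc a₁ a₂ ×ˢ Set.Icc b₁ b₂ : Set (ℝ × ℝ)))
    exact this
  have hZcont : Continuous fun s : ℝ × ℝ => g (s.1, s.2) := by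
    simpa using g.continuous
  have hmain := GRaux.GR_main hk ha hb (fun x y => g (x, y)) hZcont
  refine (existsUnique_congr ?_).2 hmain
  intro P
  have h1 : ∀ v : ℝ → ℝ → ℝ,
      (∫ x in a₁..a₂, ∫ y in b₁..b₂, g (x, y) * v x y)
        = ∫ x in a₁..a₂, ∫ y in b₁..b₂, z x y * v x y := by
    intro v
    refine intervalIntegral.integral_congr fun x hx => ?_
    rw [Set.uIcc_of_le ha.le] at hx
    refine intervalIntegral.integral_congr fun y hy => ?_
    rw [Set.uIcc_of_le hb.le] at hy
    rw [hg' x hx y hy]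
  have h2 : ∀ v : ℝ → ℝ,
      (∫ y in b₁..b₂, g (a₂, y) * v y) = ∫ y in b₁..b₂, z a₂ y * v y := by
    intro v
    refine intervalIntegral.integral_congr fun y hy => ?_
    rw [Set.uIcc_of_le hb.le] at hy
    rw [hg' a₂ (Set.right_mem_Icc.2 ha.le) y hy]
  have h3 : ∀ v : ℝ → ℝ,
      (∫ x in a₁..a₂, g (x, b₂) * v x) = ∫ x in a₁..a₂, z x b₂ * v x := by
    intro v
    refine intervalIntegral.integral_congr fun x hx => ?_
    rw [Set.uIcc_of_le ha.le] at hx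
    rw [hg' x hx b₂ (Set.right_mem_Icc.2 hb.le)]
  have h4 : g (a₂, b₂) = z a₂ b₂ :=
    hg' a₂ (Set.right_mem_Icc.2 ha.le) b₂ (Set.right_mem_Icc.2 hb.le)
  constructor
  · rintro ⟨hp, hi, hii, hiii, hiv⟩
    exact ⟨hp, fun v hv => (hi v hv).trans (h1 v).symm,
      fun v hv => (hii v hv).trans (h2 v).symm,
      fun v hv => (hiii v hv).trans (h3 v).symm, hiv.trans h4.symm⟩
  · rintro ⟨hp, hi, hii, hiii, hiv⟩
    exact ⟨hp, fun v hv => (hi v hv).trans (h1 v),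
      fun v hv => (hii v hv).trans (h2 v),
      fun v hv => (hiii v hv).trans (h3 v), hiv.trans h4⟩
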